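/- Let S ⊆ ℝ^n and suppose there exists R ⊆ S with |R| = w such that for all distinct x, y ∈ R, (x+y)/2 ∉ S. If M ⊆ ℝ^{n+p+d} is a convex set with S = proj_x(M ∩ (ℝ^{n+p} × ℤ^d)), then d ≥ ⌈log₂(w)⌉. -/

import Mathlib

theorem stmt_5 (n p d w : ℕ)
    (S : Set (Fin n → ℝ)) (R : Set (Fin n → ℝ))
    (hRS : R ⊆ S) (hRfin : R.Finite) (hRcard : R.ncard = w)
    (hmid : ∀ x ∈ R, ∀ y ∈ R, x ≠ y → (fun i => (x i + y i) / 2) ∉ S)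
    (M : Set ((Fin n → ℝ) × (Fin p → ℝ) × (Fin d → ℝ)))
    (hM : Convex ℝ M)
    (hS : S = {x | ∃ y z, (x, y, z) ∈ M ∧ ∀ i, ∃ m : ℤ, z i = (m : ℝ)}) :
    Nat.clog 2 w ≤ d := by
  rw [Nat.clog_le_iff_le_pow (by norm_num : 1 < 2)]
  by_contra hcon
  push_neg at hcon
  have hchoice : ∀ r, r ∈ R → ∃ y z,
      ((r : Fin n → ℝ), y, z) ∈ M ∧ ∀ i, ∃ m : ℤ, z i = (m : ℝ) := by
    intro r hr
    have := hRS hr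
    rw [hS] at this
    exact this
  choose! Y Z hZM hZint using hchoice
  choose! mz hmz using hZint
  -- pigeonhole on parity vectors
  have hcard : (Finset.univ : Finset (Fin d → ZMod 2)).card < hRfin.toFinset.card := by
    rw [Finset.card_univ]
    have : R.ncard = hRfin.toFinset.card := Set.ncard_eq_toFinset_card R hRfin
    simp only [Fintype.card_fun, Fintype.card_fin, ZMod.card]
    omega
  obtain ⟨x, hx, y, hy, hne, hfeq⟩ :=
    Finset.exists_ne_map_eq_of_card_lt_of_maps_to hcard
      (f := fun r => (fun i => (mz r i : ZMod 2) : Fin d → ZMod 2))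
      (fun r _ => Finset.mem_univ _)
  rw [Set.Finite.mem_toFinset] at hx hy
  have heq : ∀ i, ∃ m : ℤ, mz x i + mz y i = 2 * m := by
    intro i
    have h1 : ((mz x i : ZMod 2)) = (mz y i : ZMod 2) := congrFun hfeq i
    rw [ZMod.intCast_eq_intCast_iff] at h1
    obtain ⟨k, hk⟩ := h1.dvd
    have hk' : mz y i - mz x i = 2 * k := by exact_mod_cast hk
    exact ⟨mz x i + k, by omega⟩
  have hmem := hM (hZM x hx) (hZM y hy)
      (by norm_num : (0:ℝ) ≤ 1/2) (by norm_num : (0:ℝ) ≤ 1/2) (by norm_num)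
  refine hmid x hx y hy hne ?_
  rw [hS]
  refine ⟨(1/2 : ℝ) • Y x + (1/2 : ℝ) • Y y, (1/2 : ℝ) • Z x + (1/2 : ℝ) • Z y, ?_, ?_⟩
  · have : ((fun i => (x i + y i) / 2), (1/2 : ℝ) • Y x + (1/2 : ℝ) • Y y,
        (1/2 : ℝ) • Z x + (1/2 : ℝ) • Z y)
        = (1/2 : ℝ) • (x, Y x, Z x) + (1/2 : ℝ) • (y, Y y, Z y) := by
      refine Prod.ext ?_ (Prod.ext rfl rfl)
      funext i
      simp [Pi.smul_apply]
      ring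
    rw [this]
    exact hmem
  · intro i
    obtain ⟨m, hm⟩ := heq i
    refine ⟨m, ?_⟩
    have hzx := hmz x hx i
    have hzy := hmz y hy i
    simp only [Pi.add_apply, Pi.smul_apply, smul_eq_mul, hzx, hzy]
    have : ((mz x i : ℝ) + mz y i) = 2 * m := by exact_mod_cast hm
    linarith
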